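/- Best tubal-rank approximation property of the truncated t-SVD (tensor Eckart–Young): let n ≥ 1, let X : ZMod n → Matrix (Fin I₁) (Fin I₂) ℝ, and let r be a natural number. Then there exist tensors B : ZMod n → Matrix (Fin I₁) (Fin r) ℝ and C : ZMod n → Matrix (Fin r) (Fin I₂) ℝ such that for all tensors B' : ZMod n → Matrix (Fin I₁) (Fin r) ℝ and C' : ZMod n → Matrix (Fin r) (Fin I₂) ℝ, one has ‖X − B ∗ C‖_F ≤ ‖X − B' ∗ C'‖_F; that is, the infimum of the Frobenius-norm error over all t-products with inner tubal dimension r is attained. -/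

import Mathlib

open Matrix
open Finset

variable {n : ℕ}

/-- The t-product of two third-order tensors, modeled as circular convolution
of frontal slices. -/
noncomputable def tMul [NeZero n] {a b c : ℕ}
    (X : ZMod n → Matrix (Fin a) (Fin b) ℝ) (Y : ZMod n → Matrix (Fin b) (Fin c) ℝ) :
    ZMod n → Matrix (Fin a) (Fin c) ℝ :=
  fun k => ∑ j : ZMod n, X (k - j) * Y j

/-- The tensor transpose: transpose every frontal slice and reverse the order of
the frontal slices 2 through n. -/
def tTranspose {a b : ℕ} (X : ZMod n → Matrix (Fin a) (Fin b) ℝ) :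
    ZMod n → Matrix (Fin b) (Fin a) ℝ :=
  fun k => (X (-k))ᵀ

/-- The identity tensor: the first frontal slice is the identity matrix and all
other frontal slices are zero. -/
def tId (n m : ℕ) : ZMod n → Matrix (Fin m) (Fin m) ℝ :=
  fun k => if k = 0 then 1 else 0

/-- A tensor is orthogonal if `Qᵀ ∗ Q = Q ∗ Qᵀ = I` under the t-product. -/
def tOrthogonal [NeZero n] {m : ℕ} (Q : ZMod n → Matrix (Fin m) (Fin m) ℝ) : Prop :=
  tMul (tTranspose Q) Q = tId n m ∧ tMul Q (tTranspose Q) = tId n m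

/-- The Frobenius norm of a third-order tensor. -/
noncomputable def tFrobNorm [NeZero n] {a b : ℕ}
    (X : ZMod n → Matrix (Fin a) (Fin b) ℝ) : ℝ :=
  Real.sqrt (∑ k : ZMod n, ∑ i : Fin a, ∑ j : Fin b, (X k i j) ^ 2)

namespace TS

noncomputable def ζ (n : ℕ) : ℂ := Complex.exp (2 * Real.pi * Complex.I / n)

noncomputable def ee (n : ℕ) (m : ZMod n) : ℂ := ζ n ^ m.val

variable [NeZero n]

lemma zeta_prim : IsPrimitiveRoot (ζ n) n := Complex.isPrimitiveRoot_exp n (NeZero.ne n)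

lemma zeta_pow_n : (ζ n) ^ n = 1 := zeta_prim.pow_eq_one

lemma zeta_pow_mod (x : ℕ) : (ζ n) ^ x = (ζ n) ^ (x % n) := by
  conv_lhs => rw [← Nat.div_add_mod x n]
  rw [pow_add, pow_mul, zeta_pow_n, one_pow, one_mul]

lemma ee_zero : ee n 0 = 1 := by
  simp [ee, ZMod.val_zero]

lemma ee_add (a b : ZMod n) : ee n (a + b) = ee n a * ee n b := by
  rw [ee, ee, ee, ZMod.val_add, ← zeta_pow_mod, pow_add]

lemma ee_mul_ee_neg (a : ZMod n) : ee n a * ee n (-a) = 1 := by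
  rw [← ee_add, add_neg_cancel, ee_zero]

lemma ee_ne_zero (a : ZMod n) : ee n a ≠ 0 :=
  left_ne_zero_of_mul_eq_one (ee_mul_ee_neg a)

lemma conj_ee (a : ZMod n) : (starRingEnd ℂ) (ee n a) = ee n (-a) := by
  have h : (starRingEnd ℂ) (ζ n) * ζ n = 1 := by
    rw [ζ, ← Complex.exp_conj, ← Complex.exp_add]
    have h0 : (starRingEnd ℂ) (2 * ↑Real.pi * Complex.I / ↑n) + 2 * ↑Real.pi * Complex.I / ↑n
        = 0 := by
      simp only [map_div₀, _root_.map_mul, Complex.conj_I, Complex.conj_ofReal, map_ofNat,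
        map_natCast]
      ring
    rw [h0, Complex.exp_zero]
  have h2 := ee_mul_ee_neg a
  rw [ee, map_pow, eq_inv_of_mul_eq_one_left h, inv_pow]
  rw [mul_comm] at h2
  exact (eq_inv_of_mul_eq_one_left h2).symm

lemma ee_orth (m : ZMod n) : ∑ k : ZMod n, ee n (m * k) = if m = 0 then (n : ℂ) else 0 := by
  split_ifs with h
  · subst h; simp [ee_zero, ZMod.card]
  · have hω : ∀ k : ZMod n, ee n (m * k) = (ζ n ^ m.val) ^ k.val := by
      intro k
      rw [ee, ZMod.val_mul, ← zeta_pow_mod, pow_mul]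
    have : ∑ k : ZMod n, ee n (m * k) = ∑ i ∈ range n, (ζ n ^ m.val) ^ i := by
      apply Finset.sum_nbij' (fun k : ZMod n => k.val) (fun i : ℕ => (i : ZMod n))
      · intro a _; exact mem_range.mpr (ZMod.val_lt a)
      · intros; exact mem_univ _
      · intro a _; exact ZMod.natCast_rightInverse a
      · intro i hi; exact ZMod.val_cast_of_lt (mem_range.mp hi)
      · intro a _; exact hω a
    rw [this]
    have hne1 : ζ n ^ m.val ≠ 1 := by
      intro hc
      have hv : m.val ≠ 0 := fun h0 => h (by rwa [ZMod.val_eq_zero] at h0)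
      exact (zeta_prim.pow_ne_one_of_pos_of_lt hv (ZMod.val_lt m)) hc
    rw [geom_sum_eq hne1, ← pow_mul, mul_comm m.val n, pow_mul, zeta_pow_n, one_pow,
      sub_self, zero_div]

end TS

namespace TS2

open TS

variable [NeZero n] {a b c : ℕ}

def Rmap (N : Matrix (Fin a) (Fin b) ℝ) : Matrix (Fin a) (Fin b) ℂ :=
  N.map ⇑Complex.ofRealHom

def Cmap (N : Matrix (Fin a) (Fin b) ℂ) : Matrix (Fin a) (Fin b) ℂ :=
  N.map ⇑(starRingEnd ℂ)

lemma Rmap_apply (N : Matrix (Fin a) (Fin b) ℝ) (i j) : Rmap N i j = (N i j : ℂ) := rfl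

lemma Cmap_apply (N : Matrix (Fin a) (Fin b) ℂ) (i j) :
    Cmap N i j = (starRingEnd ℂ) (N i j) := rfl

lemma Rmap_sum {ι : Type*} (s : Finset ι) (f : ι → Matrix (Fin a) (Fin b) ℝ) :
    Rmap (∑ x ∈ s, f x) = ∑ x ∈ s, Rmap (f x) := by
  ext i j
  simp [Rmap_apply, Matrix.sum_apply]

lemma Cmap_sum {ι : Type*} (s : Finset ι) (f : ι → Matrix (Fin a) (Fin b) ℂ) :
    Cmap (∑ x ∈ s, f x) = ∑ x ∈ s, Cmap (f x) := by
  ext i j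
  simp [Cmap_apply, Matrix.sum_apply]

lemma Cmap_smul (z : ℂ) (N : Matrix (Fin a) (Fin b) ℂ) :
    Cmap (z • N) = (starRingEnd ℂ) z • Cmap N := by
  ext i j
  simp [Cmap_apply, Matrix.smul_apply]

lemma Cmap_mul (N : Matrix (Fin a) (Fin b) ℂ) (P : Matrix (Fin b) (Fin c) ℂ) :
    Cmap (N * P) = Cmap N * Cmap P :=
  Matrix.map_mul

lemma Rmap_mul (N : Matrix (Fin a) (Fin b) ℝ) (P : Matrix (Fin b) (Fin c) ℝ) :
    Rmap (N * P) = Rmap N * Rmap P :=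
  Matrix.map_mul

lemma Cmap_Rmap (N : Matrix (Fin a) (Fin b) ℝ) : Cmap (Rmap N) = Rmap N := by
  ext i j
  simp [Cmap_apply, Rmap_apply, Complex.conj_ofReal]

lemma Cmap_Cmap (N : Matrix (Fin a) (Fin b) ℂ) : Cmap (Cmap N) = N := by
  ext i j
  simp [Cmap_apply]

lemma Rmap_sub (N P : Matrix (Fin a) (Fin b) ℝ) : Rmap (N - P) = Rmap N - Rmap P := by
  ext i j
  simp [Rmap_apply, Matrix.sub_apply]

lemma Rmap_eq_zero_iff {N : Matrix (Fin a) (Fin b) ℝ} : Rmap N = 0 ↔ N = 0 := by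
  constructor
  · intro h; ext i j
    have := congrFun (congrFun h i) j
    simpa [Rmap_apply] using this
  · rintro rfl; ext i j; simp [Rmap_apply]

/-- Discrete Fourier transform of a tensor, slice-wise. -/
noncomputable def four (M : ZMod n → Matrix (Fin a) (Fin b) ℝ) (t : ZMod n) :
    Matrix (Fin a) (Fin b) ℂ :=
  ∑ k : ZMod n, ee n (t * k) • Rmap (M k)

lemma Cmap_four (M : ZMod n → Matrix (Fin a) (Fin b) ℝ) (t : ZMod n) :
    Cmap (four M t) = four M (-t) := by
  unfold four
  rw [Cmap_sum]
  refine Finset.sum_congr rfl fun k _ => ?_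
  rw [Cmap_smul, Cmap_Rmap, conj_ee, neg_mul]

lemma four_sub (M M' : ZMod n → Matrix (Fin a) (Fin b) ℝ) (t : ZMod n) :
    four (M - M') t = four M t - four M' t := by
  unfold four
  rw [← Finset.sum_sub_distrib]
  refine Finset.sum_congr rfl fun k _ => ?_
  have : (M - M') k = M k - M' k := rfl
  rw [this, Rmap_sub, smul_sub]

lemma four_tMul (B : ZMod n → Matrix (Fin a) (Fin b) ℝ)
    (C : ZMod n → Matrix (Fin b) (Fin c) ℝ) (t : ZMod n) :
    four (tMul B C) t = four B t * four C t := by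
  unfold four tMul
  rw [Matrix.sum_mul]
  simp_rw [Matrix.mul_sum]
  have hR : ∀ k : ZMod n, ee n (t * k) • Rmap (∑ j : ZMod n, B (k - j) * C j)
      = ∑ j : ZMod n, ee n (t * k) • (Rmap (B (k - j)) * Rmap (C j)) := by
    intro k
    rw [Rmap_sum, Finset.smul_sum]
    exact Finset.sum_congr rfl fun j _ => by rw [Rmap_mul]
  rw [Finset.sum_congr rfl fun k _ => hR k]
  rw [Finset.sum_comm]
  conv_rhs => rw [Finset.sum_comm]
  refine Finset.sum_congr rfl fun j _ => ?_
  refine Fintype.sum_equiv (Equiv.subRight j) _ _ fun x => ?_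
  simp only [Equiv.subRight_apply]
  rw [Matrix.smul_mul, Matrix.mul_smul, smul_smul, ← ee_add]
  have hx : t * (x - j) + t * j = t * x := by ring
  rw [hx]

lemma invA (G : ZMod n → Matrix (Fin a) (Fin b) ℂ) (t : ZMod n) :
    ∑ k : ZMod n, ee n (t * k) • (∑ s : ZMod n, ee n (-(s * k)) • G s) = (n : ℂ) • G t := by
  simp_rw [Finset.smul_sum, smul_smul]
  rw [Finset.sum_comm]
  have h1 : ∀ s k : ZMod n, ee n (t * k) * ee n (-(s * k)) = ee n ((t - s) * k) := by
    intro s k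
    rw [← ee_add]
    congr 1
    ring
  simp_rw [h1, ← Finset.sum_smul, ee_orth, sub_eq_zero]
  simp [Finset.sum_ite_eq]

lemma invB (G : ZMod n → Matrix (Fin a) (Fin b) ℂ) (k : ZMod n) :
    ∑ t : ZMod n, ee n (-(t * k)) • (∑ s : ZMod n, ee n (t * s) • G s) = (n : ℂ) • G k := by
  simp_rw [Finset.smul_sum, smul_smul]
  rw [Finset.sum_comm]
  have h1 : ∀ s t : ZMod n, ee n (-(t * k)) * ee n (t * s) = ee n ((s - k) * t) := by
    intro s t
    rw [← ee_add]
    congr 1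
    ring
  simp_rw [h1, ← Finset.sum_smul, ee_orth, sub_eq_zero]
  simp [Finset.sum_ite_eq]

section LinAlg

variable {F : Type*} [Field F] {a b r : ℕ}

/-- every `s` columns of `N` are linearly dependent. -/
def colsDep (F : Type*) [Field F] {a b : ℕ} (s : ℕ) (N : Matrix (Fin a) (Fin b) F) : Prop :=
  ∀ κ : Fin s → Fin b, ¬ LinearIndependent F (fun i => (fun x => N x (κ i)))

lemma dep_of_factor (P : Matrix (Fin a) (Fin r) F) (Q : Matrix (Fin r) (Fin b) F) :
    colsDep F (r + 1) (P * Q) := by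
  intro κ hli
  set W : Submodule F (Fin a → F) :=
    Submodule.span F (Set.range fun y : Fin r => (fun x => P x y)) with hWdef
  have hmem : ∀ i, (fun x => (P * Q) x (κ i)) ∈ W := by
    intro i
    have h : (fun x => (P * Q) x (κ i)) = ∑ y : Fin r, Q y (κ i) • (fun x => P x y) := by
      funext x
      simp only [Matrix.mul_apply, Finset.sum_apply, Pi.smul_apply, smul_eq_mul]
      exact Finset.sum_congr rfl fun y _ => mul_comm _ _
    rw [h]
    exact Submodule.sum_mem _ fun y _ =>
      Submodule.smul_mem _ _ (Submodule.subset_span ⟨y, rfl⟩)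
  let v : Fin (r + 1) → W := fun i => ⟨_, hmem i⟩
  have hv : LinearIndependent F v := hli.of_comp W.subtype
  have hcard : r + 1 ≤ Module.finrank F W := by
    simpa using hv.fintype_card_le_finrank
  have hW : Module.finrank F W ≤ r := by
    simpa [Set.finrank, hWdef] using finrank_range_le_card (R := F) (fun y : Fin r => (fun x => P x y))
  omega

lemma sum_dfin {M : Type*} [AddCommMonoid M] {r m : ℕ} (hm : m ≤ r) (g : Fin m → M) :
    ∑ y : Fin r, (if hy : (y : ℕ) < m then g ⟨y, hy⟩ else 0) = ∑ i : Fin m, g i := by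
  have h2 : ∑ y : Fin r, (if hy : (y : ℕ) < m then g ⟨y, hy⟩ else 0)
      = ∑ y ∈ Finset.range r, (if hy : y < m then g ⟨y, hy⟩ else 0) :=
    Fin.sum_univ_eq_sum_range (fun y => if hy : y < m then g ⟨y, hy⟩ else 0) r
  have h3 : ∑ y ∈ Finset.range m, (if hy : y < m then g ⟨y, hy⟩ else 0)
      = ∑ y ∈ Finset.range r, (if hy : y < m then g ⟨y, hy⟩ else 0) := by
    refine Finset.sum_subset (Finset.range_subset_range.mpr hm) ?_
    intro y _ hy
    rw [dif_neg (by simpa using hy)]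
  have h4 : ∑ y ∈ Finset.range m, (if hy : y < m then g ⟨y, hy⟩ else 0) = ∑ i : Fin m, g i := by
    rw [← Fin.sum_univ_eq_sum_range (fun y => if hy : y < m then g ⟨y, hy⟩ else 0) m]
    refine Finset.sum_congr rfl fun i _ => ?_
    rw [dif_pos i.2]
  rw [h2, ← h3, h4]

lemma factor_of_dep {N : Matrix (Fin a) (Fin b) F} (h : colsDep F (r + 1) N) :
    ∃ (P : Matrix (Fin a) (Fin r) F) (Q : Matrix (Fin r) (Fin b) F), N = P * Q := by
  classical
  set col : Fin b → (Fin a → F) := fun j => (fun x => N x j) with hcol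
  set W : Submodule F (Fin a → F) := Submodule.span F (Set.range col) with hWdef
  -- finrank W ≤ r
  have hWr : Module.finrank F W ≤ r := by
    by_contra hgt
    push_neg at hgt
    obtain ⟨bs, hbsub, hbspan, hbli⟩ := exists_linearIndependent F (Set.range col)
    have hbfin : bs.Finite := (Set.finite_range col).subset hbsub
    have : Fintype bs := hbfin.fintype
    have hcardb : Module.finrank F W = bs.toFinset.card := by
      rw [hWdef, ← hbspan]
      exact finrank_span_set_eq_card hbli
    have hle : r + 1 ≤ bs.toFinset.card := by omega
    -- choose r+1 distinct elements of bs
    obtain ⟨u, hu_sub, hu_card⟩ := Finset.exists_subset_card_eq hle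
    let g : Fin (r + 1) → bs := fun i =>
      ⟨(u.equivFin.symm (Fin.cast hu_card.symm i) : _),
        Set.mem_toFinset.mp (hu_sub (u.equivFin.symm (Fin.cast hu_card.symm i)).2)⟩
    have hginj : Function.Injective g := by
      intro i₁ i₂ hii
      have hv : ((g i₁ : _) : Fin a → F) = ((g i₂ : _) : Fin a → F) := congrArg Subtype.val hii
      have h2 : u.equivFin.symm (Fin.cast hu_card.symm i₁)
          = u.equivFin.symm (Fin.cast hu_card.symm i₂) := Subtype.val_injective hv
      exact Fin.cast_injective _ (u.equivFin.symm.injective h2)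
    have hli2 : LinearIndependent F (fun i : Fin (r + 1) => ((g i : (Fin a → F)))) :=
      hbli.comp g hginj
    have hrange : ∀ i, ∃ j : Fin b, col j = (g i : (Fin a → F)) := fun i => hbsub (g i).2
    choose κ hκ using hrange
    refine h κ ?_
    have : (fun i => (fun x => N x (κ i))) = fun i => ((g i : (Fin a → F))) := by
      funext i
      exact hκ i
    rw [this]
    exact hli2
  -- now build the factorization from a basis of `W`
  set m := Module.finrank F W with hm
  let fb : Module.Basis (Fin m) F W := Module.finBasis F W
  have hmemW : ∀ j, col j ∈ W := fun j => Submodule.subset_span ⟨j, rfl⟩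
  let P : Matrix (Fin a) (Fin r) F := fun x y =>
    if hy : (y : ℕ) < m then ((fb ⟨y, hy⟩ : W) : Fin a → F) x else 0
  let Q : Matrix (Fin r) (Fin b) F := fun y j =>
    if hy : (y : ℕ) < m then fb.repr ⟨col j, hmemW j⟩ ⟨y, hy⟩ else 0
  refine ⟨P, Q, ?_⟩
  ext x j
  rw [Matrix.mul_apply]
  have hterm : ∀ y : Fin r, P x y * Q y j
      = if hy : (y : ℕ) < m
        then ((fb ⟨y, hy⟩ : W) : Fin a → F) x * fb.repr ⟨col j, hmemW j⟩ ⟨y, hy⟩ else 0 := by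
    intro y
    by_cases hy : (y : ℕ) < m
    · simp only [P, Q, dif_pos hy]
    · simp only [P, Q, dif_neg hy, zero_mul]
  have hsum : ∑ y : Fin r, (if hy : (y : ℕ) < m
        then ((fb ⟨y, hy⟩ : W) : Fin a → F) x * fb.repr ⟨col j, hmemW j⟩ ⟨y, hy⟩ else 0)
      = ∑ i : Fin m, ((fb i : W) : Fin a → F) x * fb.repr ⟨col j, hmemW j⟩ i :=
    sum_dfin hWr (fun i => ((fb i : W) : Fin a → F) x * fb.repr ⟨col j, hmemW j⟩ i)
  rw [Finset.sum_congr rfl fun y _ => hterm y, hsum]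
  have hcoord : N x j = ((⟨col j, hmemW j⟩ : W) : Fin a → F) x := rfl
  have hexpand : ((⟨col j, hmemW j⟩ : W) : Fin a → F) x
      = ∑ i : Fin m, fb.repr ⟨col j, hmemW j⟩ i * ((fb i : W) : Fin a → F) x := by
    conv_lhs => rw [← fb.sum_repr ⟨col j, hmemW j⟩]
    rw [AddSubmonoidClass.coe_finset_sum, Finset.sum_apply]
    refine Finset.sum_congr rfl fun i _ => ?_
    simp
  rw [hcoord, hexpand]
  exact Finset.sum_congr rfl fun i _ => mul_comm _ _

open scoped ComplexOrder in
lemma gram_det_zero_iff {a s : ℕ} (V : Matrix (Fin a) (Fin s) ℂ) :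
    (Vᴴ * V).det = 0 ↔ ¬ LinearIndependent ℂ (fun j : Fin s => (fun x => V x j)) := by
  rw [← Matrix.exists_mulVec_eq_zero_iff]
  constructor
  · rintro ⟨v, hv0, hv⟩
    intro hli
    have hVv : V *ᵥ v = 0 := by
      have h1 : star v ⬝ᵥ ((Vᴴ * V) *ᵥ v) = 0 := by rw [hv, dotProduct_zero]
      have h2 : star v ⬝ᵥ ((Vᴴ * V) *ᵥ v) = star (V *ᵥ v) ⬝ᵥ (V *ᵥ v) := by
        rw [← Matrix.mulVec_mulVec, Matrix.dotProduct_mulVec, ← Matrix.star_mulVec]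
      rw [h2] at h1
      exact dotProduct_star_self_eq_zero.mp h1
    have hrel : ∑ j : Fin s, v j • (fun x => V x j) = (0 : Fin a → ℂ) := by
      funext x
      have : (V *ᵥ v) x = 0 := by rw [hVv]; rfl
      rw [Matrix.mulVec] at this
      simp only [Finset.sum_apply, Pi.smul_apply, smul_eq_mul, Pi.zero_apply]
      rw [← this]
      exact Finset.sum_congr rfl fun j _ => mul_comm _ _
    have := Fintype.linearIndependent_iff.mp hli v hrel
    exact hv0 (funext this)
  · intro hdep
    rw [Fintype.not_linearIndependent_iff] at hdep
    obtain ⟨g, hg, i, hgi⟩ := hdep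
    refine ⟨g, fun hc => hgi (by rw [hc]; rfl), ?_⟩
    have hVg : V *ᵥ g = 0 := by
      funext x
      have := congrFun hg x
      simp only [Finset.sum_apply, Pi.smul_apply, smul_eq_mul, Pi.zero_apply] at this
      rw [Matrix.mulVec]
      simp only [Pi.zero_apply]
      rw [← this]
      exact Finset.sum_congr rfl fun j _ => mul_comm _ _
    rw [← Matrix.mulVec_mulVec, hVg, Matrix.mulVec_zero]

/-- transfer of column dependence from `ℂ` to `ℝ` for real matrices -/
lemma li_complexify {a s : ℕ} {v : Fin s → (Fin a → ℝ)}
    (h : LinearIndependent ℝ v) :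
    LinearIndependent ℂ (fun i => (fun x => (v i x : ℂ))) := by
  rw [Fintype.linearIndependent_iff]
  intro g hg
  have hre : ∀ x : Fin a, (∑ i, g i * (v i x : ℂ)) = 0 := by
    intro x
    have := congrFun hg x
    simpa [Finset.sum_apply] using this
  have hRe : ∀ x : Fin a, ∑ i, (g i).re * v i x = 0 := by
    intro x
    have := congrArg Complex.re (hre x)
    simpa [Complex.re_sum, Complex.mul_re] using this
  have hIm : ∀ x : Fin a, ∑ i, (g i).im * v i x = 0 := by
    intro x
    have := congrArg Complex.im (hre x)
    simpa [Complex.im_sum, Complex.mul_im] using this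
  have h1 := Fintype.linearIndependent_iff.mp h (fun i => (g i).re) (by
    funext x
    simp only [Finset.sum_apply, Pi.smul_apply, smul_eq_mul, Pi.zero_apply]
    exact hRe x)
  have h2 := Fintype.linearIndependent_iff.mp h (fun i => (g i).im) (by
    funext x
    simp only [Finset.sum_apply, Pi.smul_apply, smul_eq_mul, Pi.zero_apply]
    exact hIm x)
  intro i
  exact Complex.ext (h1 i) (h2 i)

end LinAlg

lemma colsDep_real {a b s : ℕ} {N : Matrix (Fin a) (Fin b) ℝ}
    (h : colsDep ℂ s (Rmap N)) : colsDep ℝ s N := by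
  intro κ hli
  exact h κ (li_complexify hli)

lemma Rmap_re_of_selfconj {a b : ℕ} {N : Matrix (Fin a) (Fin b) ℂ} (h : Cmap N = N) :
    Rmap (N.map Complex.re) = N := by
  ext i j
  have hent := congrFun (congrFun h i) j
  rw [Cmap_apply] at hent
  have him : (N i j).im = 0 := by
    have := congrArg Complex.im hent
    rw [Complex.conj_im] at this
    linarith
  rw [Rmap_apply]
  have : (N.map Complex.re) i j = (N i j).re := rfl
  rw [this]
  apply Complex.ext
  · simp
  · simp [him]

lemma exists_real_factor {a b r : ℕ} (M : ZMod n → Matrix (Fin a) (Fin b) ℝ) (t : ZMod n)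
    (ht : -t = t) (hdep : colsDep ℂ (r + 1) (four M t)) :
    ∃ (P : Matrix (Fin a) (Fin r) ℝ) (Q : Matrix (Fin r) (Fin b) ℝ),
      four M t = Rmap P * Rmap Q := by
  have hc : Cmap (four M t) = four M t := by rw [Cmap_four, ht]
  have hRm : Rmap ((four M t).map Complex.re) = four M t := Rmap_re_of_selfconj hc
  have hdepR : colsDep ℝ (r + 1) ((four M t).map Complex.re) := by
    refine colsDep_real ?_
    rw [hRm]
    exact hdep
  obtain ⟨P, Q, hPQ⟩ := factor_of_dep hdepR
  exact ⟨P, Q, by rw [← hRm, hPQ, Rmap_mul]⟩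

lemma exists_symm_factor {I₁ I₂ r : ℕ} (M : ZMod n → Matrix (Fin I₁) (Fin I₂) ℝ)
    (h : ∀ t, colsDep ℂ (r + 1) (four M t)) :
    ∃ (P : ZMod n → Matrix (Fin I₁) (Fin r) ℂ) (Q : ZMod n → Matrix (Fin r) (Fin I₂) ℂ),
      (∀ t, four M t = P t * Q t) ∧ (∀ t, P (-t) = Cmap (P t)) ∧ (∀ t, Q (-t) = Cmap (Q t)) := by
  classical
  choose P0 Q0 hPQ using fun t => factor_of_dep (h t)
  choose rf1 rf2 hrf using fun (t : ZMod n) (ht : -t = t) => exists_real_factor M t ht (h t)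
  have hvalinj : ∀ s t : ZMod n, s.val = t.val → s = t := by
    intro s t hv
    have h1 : ((s.val : ℕ) : ZMod n) = s := ZMod.natCast_rightInverse s
    have h2 : ((t.val : ℕ) : ZMod n) = t := ZMod.natCast_rightInverse t
    rw [← h1, ← h2, hv]
  refine ⟨fun t => if h2 : -t = t then Rmap (rf1 t h2)
      else if t.val < (-t).val then P0 t else Cmap (P0 (-t)),
    fun t => if h2 : -t = t then Rmap (rf2 t h2)
      else if t.val < (-t).val then Q0 t else Cmap (Q0 (-t)), ?_, ?_, ?_⟩
  · intro t
    by_cases h2 : -t = t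
    · simp only [dif_pos h2]
      exact hrf t h2
    · by_cases h3 : t.val < (-t).val
      · simp only [dif_neg h2, if_pos h3]
        exact hPQ t
      · simp only [dif_neg h2, if_neg h3]
        rw [← Cmap_mul, ← hPQ (-t), Cmap_four, neg_neg]
  · intro t
    by_cases h2 : -t = t
    · rw [h2]
      simp only [dif_pos h2, Cmap_Rmap]
    · have hne' : ¬(t = -t) := fun hc => h2 hc.symm
      have hvne : t.val ≠ (-t).val := fun hv => h2 (hvalinj (-t) t hv.symm)
      by_cases h3 : t.val < (-t).val
      · have h4 : ¬((-t).val < t.val) := by omega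
        simp only [neg_neg]
        rw [dif_neg hne', if_neg h4, dif_neg h2, if_pos h3]
      · have h4 : (-t).val < t.val := by omega
        simp only [neg_neg]
        rw [dif_neg hne', if_pos h4, dif_neg h2, if_neg h3, Cmap_Cmap]
  · intro t
    by_cases h2 : -t = t
    · rw [h2]
      simp only [dif_pos h2, Cmap_Rmap]
    · have hne' : ¬(t = -t) := fun hc => h2 hc.symm
      have hvne : t.val ≠ (-t).val := fun hv => h2 (hvalinj (-t) t hv.symm)
      by_cases h3 : t.val < (-t).val
      · have h4 : ¬((-t).val < t.val) := by omega
        simp only [neg_neg]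
        rw [dif_neg hne', if_neg h4, dif_neg h2, if_pos h3]
      · have h4 : (-t).val < t.val := by omega
        simp only [neg_neg]
        rw [dif_neg hne', if_pos h4, dif_neg h2, if_neg h3, Cmap_Cmap]

lemma inv_four {a b : ℕ} (P : ZMod n → Matrix (Fin a) (Fin b) ℂ)
    (hs : ∀ t, P (-t) = Cmap (P t)) (t : ZMod n) :
    four (fun k => (((n : ℂ)⁻¹ • ∑ s : ZMod n, ee n (-(s * k)) • P s).map Complex.re)) t
      = P t := by
  have hnz : (n : ℂ) ≠ 0 := Nat.cast_ne_zero.mpr (NeZero.ne n)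
  have hself : ∀ k : ZMod n, Cmap ((n : ℂ)⁻¹ • ∑ s : ZMod n, ee n (-(s * k)) • P s)
      = (n : ℂ)⁻¹ • ∑ s : ZMod n, ee n (-(s * k)) • P s := by
    intro k
    rw [Cmap_smul, Cmap_sum]
    have hterm : ∀ s : ZMod n, Cmap (ee n (-(s * k)) • P s) = ee n (s * k) • Cmap (P s) := by
      intro s
      rw [Cmap_smul, conj_ee, neg_neg]
    rw [Finset.sum_congr rfl fun s _ => hterm s]
    have hconj : (starRingEnd ℂ) ((n : ℂ)⁻¹) = (n : ℂ)⁻¹ := by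
      rw [map_inv₀, Complex.conj_natCast]
    rw [hconj]
    congr 1
    refine Fintype.sum_equiv (Equiv.neg (ZMod n)) _ _ fun s => ?_
    have h1 : -(-s * k) = s * k := by ring
    show ee n (s * k) • Cmap (P s) = ee n (-(Equiv.neg (ZMod n) s * k)) • P (Equiv.neg (ZMod n) s)
    have h2 : (Equiv.neg (ZMod n)) s = -s := rfl
    rw [h2, h1, hs s]
  have h1 : ∀ k : ZMod n,
      Rmap ((((n : ℂ)⁻¹ • ∑ s : ZMod n, ee n (-(s * k)) • P s)).map Complex.re)
        = (n : ℂ)⁻¹ • ∑ s : ZMod n, ee n (-(s * k)) • P s :=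
    fun k => Rmap_re_of_selfconj (hself k)
  simp only [four]
  rw [Finset.sum_congr rfl fun k _ => by rw [h1 k]]
  have h2 : ∀ k : ZMod n, ee n (t * k) • ((n : ℂ)⁻¹ • ∑ s : ZMod n, ee n (-(s * k)) • P s)
      = (n : ℂ)⁻¹ • (ee n (t * k) • ∑ s : ZMod n, ee n (-(s * k)) • P s) :=
    fun k => smul_comm _ _ _
  rw [Finset.sum_congr rfl fun k _ => h2 k, ← Finset.smul_sum, invA, smul_smul,
    inv_mul_cancel₀ hnz, one_smul]

lemma four_eq_zero {a b : ℕ} {D : ZMod n → Matrix (Fin a) (Fin b) ℝ}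
    (h : ∀ t, four D t = 0) : D = 0 := by
  have hnz : (n : ℂ) ≠ 0 := Nat.cast_ne_zero.mpr (NeZero.ne n)
  funext k
  have hinv := invB (fun s => Rmap (D s)) k
  have hfour : ∀ t : ZMod n, (∑ s : ZMod n, ee n (t * s) • Rmap (D s)) = four D t :=
    fun t => rfl
  rw [Finset.sum_congr rfl fun t _ => by rw [hfour t, h t, smul_zero]] at hinv
  rw [Finset.sum_const_zero] at hinv
  have : Rmap (D k) = 0 := by
    rcases smul_eq_zero.mp hinv.symm with h' | h'
    · exact absurd h' hnz
    · exact h'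
  have hk : D k = 0 := Rmap_eq_zero_iff.mp this
  exact hk

lemma eq_tMul_of_four_dep {I₁ I₂ r : ℕ} (M : ZMod n → Matrix (Fin I₁) (Fin I₂) ℝ)
    (h : ∀ t, colsDep ℂ (r + 1) (four M t)) :
    ∃ (B : ZMod n → Matrix (Fin I₁) (Fin r) ℝ) (C : ZMod n → Matrix (Fin r) (Fin I₂) ℝ),
      M = tMul B C := by
  obtain ⟨P, Q, hPQ, hsP, hsQ⟩ := exists_symm_factor M h
  obtain ⟨B, hB⟩ : ∃ B, ∀ t, four B t = P t := ⟨_, inv_four P hsP⟩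
  obtain ⟨C, hC⟩ : ∃ C, ∀ t, four C t = Q t := ⟨_, inv_four Q hsQ⟩
  refine ⟨B, C, ?_⟩
  have hD : ∀ t, four (M - tMul B C) t = 0 := fun t => by
    rw [four_sub, four_tMul, hB t, hC t, ← hPQ t, sub_self]
  exact sub_eq_zero.mp (four_eq_zero hD)

lemma four_dep_of_tMul {I₁ I₂ r : ℕ} (B : ZMod n → Matrix (Fin I₁) (Fin r) ℝ)
    (C : ZMod n → Matrix (Fin r) (Fin I₂) ℝ) (t : ZMod n) :
    colsDep ℂ (r + 1) (four (tMul B C) t) := by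
  rw [four_tMul]
  exact dep_of_factor _ _

lemma mem_S_iff {I₁ I₂ r : ℕ} (M : ZMod n → Matrix (Fin I₁) (Fin I₂) ℝ) :
    (∃ (B : ZMod n → Matrix (Fin I₁) (Fin r) ℝ) (C : ZMod n → Matrix (Fin r) (Fin I₂) ℝ),
        M = tMul B C)
      ↔ ∀ (t : ZMod n) (κ : Fin (r + 1) → Fin I₂),
          (((four M t).submatrix id κ)ᴴ * ((four M t).submatrix id κ)).det = 0 := by
  constructor
  · rintro ⟨B, C, rfl⟩ t κ
    rw [gram_det_zero_iff]
    exact four_dep_of_tMul B C t κ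
  · intro hdet
    apply eq_tMul_of_four_dep
    intro t κ
    exact (gram_det_zero_iff ((four M t).submatrix id κ)).mp (hdet t κ)

lemma continuous_four {I₁ I₂ : ℕ} (t : ZMod n) :
    Continuous fun M : ZMod n → Matrix (Fin I₁) (Fin I₂) ℝ => four M t := by
  apply continuous_finset_sum
  intro k _
  have h0 : Continuous fun M : ZMod n → Matrix (Fin I₁) (Fin I₂) ℝ => Rmap (M k) := by
    apply continuous_matrix
    intro i j
    exact Complex.continuous_ofReal.comp ((continuous_apply k).matrix_elem i j)
  exact h0.const_smul (ee n (t * k))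

lemma isClosed_S {I₁ I₂ r : ℕ} :
    IsClosed {M : ZMod n → Matrix (Fin I₁) (Fin I₂) ℝ |
      ∃ (B : ZMod n → Matrix (Fin I₁) (Fin r) ℝ) (C : ZMod n → Matrix (Fin r) (Fin I₂) ℝ),
        M = tMul B C} := by
  have hset : {M : ZMod n → Matrix (Fin I₁) (Fin I₂) ℝ |
      ∃ (B : ZMod n → Matrix (Fin I₁) (Fin r) ℝ) (C : ZMod n → Matrix (Fin r) (Fin I₂) ℝ),
        M = tMul B C}
      = ⋂ (t : ZMod n), ⋂ (κ : Fin (r + 1) → Fin I₂),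
          {M | (((four M t).submatrix id κ)ᴴ * ((four M t).submatrix id κ)).det = 0} := by
    ext M
    simp only [Set.mem_setOf_eq, Set.mem_iInter, mem_S_iff]
  rw [hset]
  refine isClosed_iInter fun t => isClosed_iInter fun κ => ?_
  have hc : Continuous fun M : ZMod n → Matrix (Fin I₁) (Fin I₂) ℝ =>
      (((four M t).submatrix id κ)ᴴ * ((four M t).submatrix id κ)).det := by
    have h1 := (continuous_four (I₁ := I₁) (I₂ := I₂) t)
    exact (((h1.matrix_submatrix id κ).matrix_conjTranspose).matrix_mul
      (h1.matrix_submatrix id κ)).matrix_det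
  exact isClosed_eq hc continuous_const

end TS2

/-- Best tubal-rank approximation (tensor Eckart–Young): the infimum of the
Frobenius-norm error over all t-products with inner tubal dimension `r` is
attained. -/
theorem tsvd_best_tubal_rank_approx (n I₁ I₂ r : ℕ) [NeZero n]
    (X : ZMod n → Matrix (Fin I₁) (Fin I₂) ℝ) :
    ∃ (B : ZMod n → Matrix (Fin I₁) (Fin r) ℝ)
      (C : ZMod n → Matrix (Fin r) (Fin I₂) ℝ),
      ∀ (B' : ZMod n → Matrix (Fin I₁) (Fin r) ℝ)
        (C' : ZMod n → Matrix (Fin r) (Fin I₂) ℝ),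
        tFrobNorm (X - tMul B C) ≤ tFrobNorm (X - tMul B' C') := by
  classical
  set S := {M : ZMod n → Matrix (Fin I₁) (Fin I₂) ℝ |
    ∃ (B : ZMod n → Matrix (Fin I₁) (Fin r) ℝ) (C : ZMod n → Matrix (Fin r) (Fin I₂) ℝ),
      M = tMul B C} with hS
  let Φ : (ZMod n → Matrix (Fin I₁) (Fin I₂) ℝ)
      → EuclideanSpace ℝ (ZMod n × Fin I₁ × Fin I₂) := fun M =>
    (EuclideanSpace.equiv (ZMod n × Fin I₁ × Fin I₂) ℝ).symm (fun p => M p.1 p.2.1 p.2.2)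
  let Φinv : EuclideanSpace ℝ (ZMod n × Fin I₁ × Fin I₂)
      → (ZMod n → Matrix (Fin I₁) (Fin I₂) ℝ) := fun x k => Matrix.of fun i j =>
    (EuclideanSpace.equiv (ZMod n × Fin I₁ × Fin I₂) ℝ) x (k, i, j)
  have hΦinvcont : Continuous Φinv := by
    apply continuous_pi
    intro k
    apply continuous_matrix
    intro i j
    exact (continuous_apply ((k, i, j) : ZMod n × Fin I₁ × Fin I₂)).comp
      (EuclideanSpace.equiv (ZMod n × Fin I₁ × Fin I₂) ℝ).continuous
  have hID : ∀ M, Φinv (Φ M) = M := fun M => rfl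
  have hID2 : ∀ x, Φ (Φinv x) = x := fun x => rfl
  have hT : (Φ '' S) = Φinv ⁻¹' S := by
    ext x
    constructor
    · rintro ⟨M, hM, rfl⟩
      rw [Set.mem_preimage, hID]
      exact hM
    · intro hx
      exact ⟨Φinv x, hx, hID2 x⟩
  have hclosed : IsClosed (Φ '' S) := by
    rw [hT]
    exact TS2.isClosed_S.preimage hΦinvcont
  have hne : (Φ '' S).Nonempty := ⟨Φ (tMul 0 0), ⟨tMul 0 0, ⟨0, 0, rfl⟩, rfl⟩⟩
  obtain ⟨y, hyT, hymin⟩ := hclosed.exists_infDist_eq_dist hne (Φ X)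
  obtain ⟨M₀, hM₀S, rfl⟩ := hyT
  obtain ⟨B, C, rfl⟩ := hM₀S
  have hfr : ∀ M : ZMod n → Matrix (Fin I₁) (Fin I₂) ℝ,
      tFrobNorm (X - M) = dist (Φ X) (Φ M) := by
    intro M
    rw [dist_eq_norm]
    have hsub : Φ X - Φ M = Φ (X - M) := by
      rw [show Φ X = (EuclideanSpace.equiv _ ℝ).symm (fun p => X p.1 p.2.1 p.2.2) from rfl,
        show Φ M = (EuclideanSpace.equiv _ ℝ).symm (fun p => M p.1 p.2.1 p.2.2) from rfl,
        ← map_sub]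
      rfl
    rw [hsub, EuclideanSpace.norm_eq]
    unfold _root_.tFrobNorm
    congr 1
    rw [Fintype.sum_prod_type]
    refine Finset.sum_congr rfl fun k _ => ?_
    rw [Fintype.sum_prod_type]
    refine Finset.sum_congr rfl fun i _ => ?_
    refine Finset.sum_congr rfl fun j _ => ?_
    have h1 : Φ (X - M) (k, i, j) = (X - M) k i j := rfl
    rw [h1, Real.norm_eq_abs, sq_abs]
  refine ⟨B, C, fun B' C' => ?_⟩
  have hmem : Φ (tMul B' C') ∈ Φ '' S := ⟨tMul B' C', ⟨B', C', rfl⟩, rfl⟩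
  rw [hfr (tMul B C), hfr (tMul B' C')]
  rw [← hymin]
  exact Metric.infDist_le_dist_of_mem hmem
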